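/- Assume θ₁,...,θ₆ ∈ (0,π) are the dihedral angles of a spherical tetrahedron, so that at each of the four vertices the three incident angles satisfy the admissibility conditions (each sum of two minus the third lies in (0,π) and the total sum lies in (π, 3π)). Let a_j = e^{iθ_j} and define Δ(a₁,...,a₆) = Δ₀(a₁,a₂,a₃) + Δ₀(a₁,a₅,a₆) + Δ₀(a₂,a₄,a₆) + Δ₀(a₃,a₄,a₅) - (1/2)Σⱼ₌₁⁶ (log a_j)², where Δ₀(x,y,z) = -(1/4)(Li₂(-xy⁻¹z⁻¹) + Li₂(-x⁻¹yz⁻¹) + Li₂(-x⁻¹y⁻¹z) + Li₂(-xyz)). Then Re(Δ(a₁,...,a₆)) = -2π²/3 + (π/2) Σⱼ₌₁⁶ θ_j. -/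

import Mathlib

open scoped Real

/-- The dilogarithm function, given on the closed unit disk by its power series
(the principal branch). -/
noncomputable def Li2 (z : ℂ) : ℂ := ∑' n : ℕ, z ^ (n + 1) / ((n : ℂ) + 1) ^ 2

/-- `Δ₀(x,y,z)` of Murakami's paper. -/
noncomputable def Delta0 (x y z : ℂ) : ℂ :=
  -(1 / 4) * (Li2 (-(x*y⁻¹*z⁻¹)) + Li2 (-(x⁻¹*y*z⁻¹)) + Li2 (-(x⁻¹*y⁻¹*z)) + Li2 (-(x*y*z)))

/-- `Δ(a₁,…,a₆)` of Murakami's paper. -/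
noncomputable def Delta (a₁ a₂ a₃ a₄ a₅ a₆ : ℂ) : ℂ :=
  Delta0 a₁ a₂ a₃ + Delta0 a₁ a₅ a₆ + Delta0 a₂ a₄ a₆ + Delta0 a₃ a₄ a₅
    - (1 / 2) * (Complex.log a₁ ^ 2 + Complex.log a₂ ^ 2 + Complex.log a₃ ^ 2
      + Complex.log a₄ ^ 2 + Complex.log a₅ ^ 2 + Complex.log a₆ ^ 2)

open Complex

lemma cos_hasSum (θ : ℝ) (h0 : 0 ≤ θ) (h2 : θ ≤ 2 * π) :
    HasSum (fun n : ℕ => Real.cos (((n : ℝ) + 1) * θ) / ((n : ℝ) + 1) ^ 2)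
      (θ ^ 2 / 4 - π * θ / 2 + π ^ 2 / 6) := by
  have hπ : (0:ℝ) < π := Real.pi_pos
  have hx : θ / (2 * π) ∈ Set.Icc (0 : ℝ) 1 :=
    ⟨div_nonneg h0 (by positivity), by rw [div_le_one (by positivity)]; linarith⟩
  have H := hasSum_one_div_nat_pow_mul_cos (k := 1) one_ne_zero hx
  have hB : (Polynomial.map (algebraMap ℚ ℝ) (Polynomial.bernoulli (2 * 1))).eval (θ / (2 * π))
      = (θ / (2*π)) ^ 2 - (θ / (2*π)) + 1/6 := by
    norm_num [Polynomial.bernoulli, Finset.sum_range_succ, bernoulli_one, bernoulli_zero,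
      bernoulli_eq_bernoulli'_of_ne_one (by norm_num : (2:ℕ) ≠ 1), bernoulli'_two]
    ring
  rw [hB] at H
  have H2 := (hasSum_nat_add_iff' (f := fun n : ℕ =>
      1 / (n : ℝ) ^ (2 * 1) * Real.cos (2 * π * n * (θ / (2 * π)))) 1).mpr H
  convert H2 using 1
  · rfl
  · funext n
    push_cast
    have harg : 2 * π * ((n:ℝ) + 1) * (θ / (2 * π)) = ((n:ℝ) + 1) * θ := by
      field_simp
    rw [harg]; ring
  · norm_num [Nat.factorial]
    field_simp
    ring

lemma reLi2 (θ : ℝ) (h0 : 0 ≤ θ) (h2 : θ ≤ 2 * π) :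
    (Li2 (Complex.exp (θ * Complex.I))).re = θ ^ 2 / 4 - π * θ / 2 + π ^ 2 / 6 := by
  have hterm : ∀ n : ℕ, Complex.exp (θ * I) ^ (n + 1) / ((n : ℂ) + 1) ^ 2
      = Complex.exp ((((n:ℝ) + 1) * θ : ℝ) * I) / ((((n:ℝ) + 1) ^ 2 : ℝ) : ℂ) := by
    intro n
    rw [← Complex.exp_nat_mul]
    push_cast
    ring_nf
  have hsum : Summable (fun n : ℕ => Complex.exp (θ * I) ^ (n + 1) / ((n : ℂ) + 1) ^ 2) := by
    apply Summable.of_norm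
    have hn : ∀ n : ℕ, ‖Complex.exp (θ * I) ^ (n + 1) / ((n : ℂ) + 1) ^ 2‖
        = 1 / ((n : ℝ) + 1) ^ 2 := by
      intro n
      rw [hterm n, norm_div, Complex.norm_real, Real.norm_eq_abs,
        Complex.norm_exp_ofReal_mul_I,
        abs_of_nonneg (a := ((n:ℝ)+1)^2) (by positivity)]
    rw [summable_congr (fun n => hn n)]
    have := (summable_nat_add_iff (f := fun n : ℕ => 1 / (n : ℝ) ^ 2) 1).mpr
      (Real.summable_one_div_nat_pow.mpr one_lt_two)
    refine this.congr fun n => ?_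
    push_cast
    ring
  rw [Li2, Complex.re_tsum hsum]
  have hre : ∀ n : ℕ, (Complex.exp (θ * I) ^ (n + 1) / ((n : ℂ) + 1) ^ 2).re
      = Real.cos (((n : ℝ) + 1) * θ) / ((n : ℝ) + 1) ^ 2 := by
    intro n
    rw [hterm n, Complex.div_ofReal_re, Complex.exp_ofReal_mul_I_re]
  calc ∑' n : ℕ, (Complex.exp (θ * I) ^ (n + 1) / ((n : ℂ) + 1) ^ 2).re
      = ∑' n : ℕ, Real.cos (((n : ℝ) + 1) * θ) / ((n : ℝ) + 1) ^ 2 := by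
        exact tsum_congr hre
    _ = θ ^ 2 / 4 - π * θ / 2 + π ^ 2 / 6 := (cos_hasSum θ h0 h2).tsum_eq

lemma reDelta0 (x y z : ℝ)
    (h1 : 0 < x + y - z) (h1' : x + y - z < π)
    (h2 : 0 < x - y + z) (h2' : x - y + z < π)
    (h3 : 0 < -x + y + z) (h3' : -x + y + z < π)
    (h4 : π < x + y + z) (h4' : x + y + z < 3 * π) :
    (Delta0 (Complex.exp (x*Complex.I)) (Complex.exp (y*Complex.I))
        (Complex.exp (z*Complex.I))).re
      = -(x^2+y^2+z^2)/4 + π*(x+y+z)/4 - π^2/6 := by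
  have hπ : (0:ℝ) < π := Real.pi_pos
  have e1 : -(Complex.exp (x*Complex.I) * (Complex.exp (y*Complex.I))⁻¹
      * (Complex.exp (z*Complex.I))⁻¹) = Complex.exp (((π + x - y - z : ℝ) : ℂ) * Complex.I) := by
    rw [show (((π + x - y - z : ℝ) : ℂ) * Complex.I)
        = ↑π * Complex.I + (↑x * Complex.I + -(↑y * Complex.I) + -(↑z * Complex.I)) by
        push_cast; ring,
      Complex.exp_add (↑π * Complex.I), Complex.exp_pi_mul_I,
      ← Complex.exp_neg, ← Complex.exp_neg, ← Complex.exp_add, ← Complex.exp_add]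
    ring
  have e2 : -((Complex.exp (x*Complex.I))⁻¹ * Complex.exp (y*Complex.I)
      * (Complex.exp (z*Complex.I))⁻¹) = Complex.exp (((π - x + y - z : ℝ) : ℂ) * Complex.I) := by
    rw [show (((π - x + y - z : ℝ) : ℂ) * Complex.I)
        = ↑π * Complex.I + (-(↑x * Complex.I) + ↑y * Complex.I + -(↑z * Complex.I)) by
        push_cast; ring,
      Complex.exp_add (↑π * Complex.I), Complex.exp_pi_mul_I,
      ← Complex.exp_neg, ← Complex.exp_neg, ← Complex.exp_add, ← Complex.exp_add]
    ring
  have e3 : -((Complex.exp (x*Complex.I))⁻¹ * (Complex.exp (y*Complex.I))⁻¹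
      * Complex.exp (z*Complex.I)) = Complex.exp (((π - x - y + z : ℝ) : ℂ) * Complex.I) := by
    rw [show (((π - x - y + z : ℝ) : ℂ) * Complex.I)
        = ↑π * Complex.I + (-(↑x * Complex.I) + -(↑y * Complex.I) + ↑z * Complex.I) by
        push_cast; ring,
      Complex.exp_add (↑π * Complex.I), Complex.exp_pi_mul_I,
      ← Complex.exp_neg, ← Complex.exp_neg, ← Complex.exp_add, ← Complex.exp_add]
    ring
  have e4 : -(Complex.exp (x*Complex.I) * Complex.exp (y*Complex.I)
      * Complex.exp (z*Complex.I)) = Complex.exp (((x + y + z - π : ℝ) : ℂ) * Complex.I) := by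
    rw [show (((x + y + z - π : ℝ) : ℂ) * Complex.I)
        = (↑x * Complex.I + ↑y * Complex.I + ↑z * Complex.I) + -(↑π * Complex.I) by
        push_cast; ring,
      Complex.exp_add, Complex.exp_add, Complex.exp_add, Complex.exp_neg,
      Complex.exp_pi_mul_I]
    ring
  rw [Delta0, e1, e2, e3, e4,
    show (-(1/4 : ℂ)) = Complex.ofReal (-(1/4)) from by norm_num, Complex.re_ofReal_mul,
    Complex.add_re, Complex.add_re, Complex.add_re,
    reLi2 _ (by linarith) (by linarith),
    reLi2 _ (by linarith) (by linarith),
    reLi2 _ (by linarith) (by linarith),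
    reLi2 _ (by linarith) (by linarith)]
  ring

/-- The admissibility condition for the three dihedral angles at edges meeting
at a vertex of a spherical tetrahedron. -/
def Admissible (x y z : ℝ) : Prop :=
  (0 < x + y - z ∧ x + y - z < π) ∧ (0 < x - y + z ∧ x - y + z < π)
    ∧ (0 < -x + y + z ∧ -x + y + z < π) ∧ (π < x + y + z ∧ x + y + z < 3 * π)

theorem re_Delta
    (θ₁ θ₂ θ₃ θ₄ θ₅ θ₆ : ℝ)
    (h₁ : θ₁ ∈ Set.Ioo 0 π) (h₂ : θ₂ ∈ Set.Ioo 0 π) (h₃ : θ₃ ∈ Set.Ioo 0 π)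
    (h₄ : θ₄ ∈ Set.Ioo 0 π) (h₅ : θ₅ ∈ Set.Ioo 0 π) (h₆ : θ₆ ∈ Set.Ioo 0 π)
    (hv₁ : Admissible θ₁ θ₂ θ₃) (hv₂ : Admissible θ₁ θ₅ θ₆)
    (hv₃ : Admissible θ₂ θ₄ θ₆) (hv₄ : Admissible θ₃ θ₄ θ₅)
    (a₁ a₂ a₃ a₄ a₅ a₆ : ℂ)
    (ha₁ : a₁ = Complex.exp (θ₁ * Complex.I)) (ha₂ : a₂ = Complex.exp (θ₂ * Complex.I))
    (ha₃ : a₃ = Complex.exp (θ₃ * Complex.I)) (ha₄ : a₄ = Complex.exp (θ₄ * Complex.I))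
    (ha₅ : a₅ = Complex.exp (θ₅ * Complex.I)) (ha₆ : a₆ = Complex.exp (θ₆ * Complex.I)) :
    (Delta a₁ a₂ a₃ a₄ a₅ a₆).re
      = -2 * π ^ 2 / 3 + (π / 2) * (θ₁ + θ₂ + θ₃ + θ₄ + θ₅ + θ₆) := by
  subst ha₁ ha₂ ha₃ ha₄ ha₅ ha₆
  obtain ⟨⟨v11, v12⟩, ⟨v21, v22⟩, ⟨v31, v32⟩, ⟨v41, v42⟩⟩ := hv₁
  obtain ⟨⟨w11, w12⟩, ⟨w21, w22⟩, ⟨w31, w32⟩, ⟨w41, w42⟩⟩ := hv₂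
  obtain ⟨⟨x11, x12⟩, ⟨x21, x22⟩, ⟨x31, x32⟩, ⟨x41, x42⟩⟩ := hv₃
  obtain ⟨⟨y11, y12⟩, ⟨y21, y22⟩, ⟨y31, y32⟩, ⟨y41, y42⟩⟩ := hv₄
  have hlog : ∀ θ : ℝ, 0 < θ → θ < π →
      (Complex.log (Complex.exp (θ * Complex.I))) ^ 2 = Complex.ofReal (-θ^2) := by
    intro θ hθ1 hθ2
    rw [Complex.log_exp (by simpa using by linarith [Real.pi_pos]) (by simpa using le_of_lt hθ2)]
    rw [mul_pow, Complex.I_sq]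
    push_cast
    ring
  rw [Delta, Complex.sub_re, Complex.add_re, Complex.add_re, Complex.add_re,
    reDelta0 _ _ _ v11 v12 v21 v22 v31 v32 v41 v42,
    reDelta0 _ _ _ w11 w12 w21 w22 w31 w32 w41 w42,
    reDelta0 _ _ _ x11 x12 x21 x22 x31 x32 x41 x42,
    reDelta0 _ _ _ y11 y12 y21 y22 y31 y32 y41 y42,
    hlog θ₁ h₁.1 h₁.2, hlog θ₂ h₂.1 h₂.2, hlog θ₃ h₃.1 h₃.2,
    hlog θ₄ h₄.1 h₄.2, hlog θ₅ h₅.1 h₅.2, hlog θ₆ h₆.1 h₆.2,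
    show (1/2 : ℂ) = Complex.ofReal (1/2) from by norm_num,
    ← Complex.ofReal_add, ← Complex.ofReal_add, ← Complex.ofReal_add,
    ← Complex.ofReal_add, ← Complex.ofReal_add, ← Complex.ofReal_mul, Complex.ofReal_re]
  ring
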